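/- Define the set function f_2 on subsets of V by f_2(∅) = 0 and, for nonempty S, f_2(S) = C_2 − tr( Q_S⁻² ), where C_2 = 2·max over single nodes s ∈ V of tr( Q_{{s}}⁻² ). Then f_2 is non-decreasing and submodular. -/

import Mathlib

open Matrix Finset Filter Topology

section Helpers

variable {n : ℕ}




section helpers

-- symmetric swap of quadratic form arguments
lemma dot_symm {A : Matrix (Fin n) (Fin n) ℝ} (hA : A.IsHermitian)
    (u v : Fin n → ℝ) : u ⬝ᵥ A *ᵥ v = v ⬝ᵥ A *ᵥ u := by
  have hAt : Aᵀ = A := by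
    rw [← conjTranspose_eq_transpose_of_trivial]; exact hA
  calc u ⬝ᵥ A *ᵥ v = (u ᵥ* A) ⬝ᵥ v := dotProduct_mulVec u A v
    _ = (Aᵀ *ᵥ u) ⬝ᵥ v := by rw [mulVec_transpose]
    _ = (A *ᵥ u) ⬝ᵥ v := by rw [hAt]
    _ = v ⬝ᵥ A *ᵥ u := dotProduct_comm _ _

lemma psd_form_nonneg {A : Matrix (Fin n) (Fin n) ℝ} (hA : A.PosSemidef)
    (v : Fin n → ℝ) : 0 ≤ v ⬝ᵥ A *ᵥ v := by
  simpa using hA.dotProduct_mulVec_nonneg v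

lemma psd_trace_nonneg {A : Matrix (Fin n) (Fin n) ℝ} (hA : A.PosSemidef) :
    0 ≤ A.trace := by
  have : ∀ i, 0 ≤ A i i := by
    intro i
    have := psd_form_nonneg hA (Pi.single i 1)
    simpa [dotProduct_single, single_dotProduct, mulVec_single] using this
  exact Finset.sum_nonneg fun i _ => this i

lemma psd_trace_mul_nonneg {A B : Matrix (Fin n) (Fin n) ℝ}
    (hA : A.PosSemidef) (hB : B.PosSemidef) : 0 ≤ (A * B).trace := by
  obtain ⟨C, rfl⟩ : ∃ C : Matrix (Fin n) (Fin n) ℝ, B = Cᴴ * C := by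
    open scoped MatrixOrder in exact CStarAlgebra.nonneg_iff_eq_star_mul_self.mp hB.nonneg
  have h1 : A * (Cᴴ * C) = (A * Cᴴ) * C := by rw [Matrix.mul_assoc]
  rw [h1, Matrix.trace_mul_cycle]
  exact psd_trace_nonneg (hA.mul_mul_conjTranspose_same (B := C))

end helpers




lemma psd_cauchy_schwarz {A : Matrix (Fin n) (Fin n) ℝ} (hA : A.PosSemidef)
    (u v : Fin n → ℝ) :
    (u ⬝ᵥ A *ᵥ v) ^ 2 ≤ (u ⬝ᵥ A *ᵥ u) * (v ⬝ᵥ A *ᵥ v) := by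
  have key : ∀ t : ℝ, 0 ≤ (v ⬝ᵥ A *ᵥ v) * (t * t) + (2 * (u ⬝ᵥ A *ᵥ v)) * t
      + (u ⬝ᵥ A *ᵥ u) := by
    intro t
    have h := psd_form_nonneg hA (u + t • v)
    have expand : (u + t • v) ⬝ᵥ A *ᵥ (u + t • v)
        = (v ⬝ᵥ A *ᵥ v) * (t * t) + (2 * (u ⬝ᵥ A *ᵥ v)) * t + (u ⬝ᵥ A *ᵥ u) := by
      have swap : v ⬝ᵥ A *ᵥ u = u ⬝ᵥ A *ᵥ v := dot_symm hA.1 v u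
      simp only [mulVec_add, mulVec_smul, dotProduct_add, add_dotProduct,
        dotProduct_smul, smul_dotProduct, smul_eq_mul, swap]
      ring
    linarith [expand ▸ h]
  have hd := discrim_le_zero key
  rw [discrim] at hd
  nlinarith [hd]

/-- `A ⪯ (trace A) • 1` for PSD `A`. -/
lemma psd_form_le_trace {A : Matrix (Fin n) (Fin n) ℝ} (hA : A.PosSemidef)
    (v : Fin n → ℝ) : v ⬝ᵥ A *ᵥ v ≤ A.trace * (v ⬝ᵥ v) := by
  obtain ⟨C, rfl⟩ : ∃ C : Matrix (Fin n) (Fin n) ℝ, A = Cᴴ * C := by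
    open scoped MatrixOrder in exact CStarAlgebra.nonneg_iff_eq_star_mul_self.mp hA.nonneg
  have h1 : v ⬝ᵥ (Cᴴ * C) *ᵥ v = (C *ᵥ v) ⬝ᵥ (C *ᵥ v) := by
    rw [← mulVec_mulVec, dotProduct_mulVec]
    congr 1
    rw [← mulVec_transpose, ← conjTranspose_eq_transpose_of_trivial,
      conjTranspose_conjTranspose]
  rw [h1]
  have h2 : ∀ i, (C *ᵥ v) i ^ 2 ≤ (∑ j, C i j ^ 2) * (v ⬝ᵥ v) := by
    intro i
    have := Finset.sum_mul_sq_le_sq_mul_sq Finset.univ (fun j => C i j) v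
    simpa [mulVec, dotProduct, pow_two] using this
  have h3 : (C *ᵥ v) ⬝ᵥ (C *ᵥ v) = ∑ i, (C *ᵥ v) i ^ 2 := by
    simp [dotProduct, pow_two]
  have h4 : (Cᴴ * C).trace = ∑ i, ∑ j, C i j ^ 2 := by
    rw [Matrix.trace]
    simp only [Matrix.diag, Matrix.mul_apply, conjTranspose_apply, star_trivial]
    rw [Finset.sum_comm]
    simp [pow_two]
  rw [h3, h4, Finset.sum_mul]
  exact Finset.sum_le_sum fun i _ => h2 i


-- quadratic form of (q • 1 - A) PSD gives bound
lemma form_le_of_psd {A : Matrix (Fin n) (Fin n) ℝ} {q : ℝ}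
    (h : (q • (1 : Matrix (Fin n) (Fin n) ℝ) - A).PosSemidef) (v : Fin n → ℝ) :
    v ⬝ᵥ A *ᵥ v ≤ q * (v ⬝ᵥ v) := by
  have := psd_form_nonneg h v
  simp only [sub_mulVec, smul_mulVec, one_mulVec, dotProduct_sub,
    dotProduct_smul, smul_eq_mul] at this
  linarith

/-- ‖A v‖² ≤ q² ‖v‖² when 0 ⪯ A ⪯ q•1 -/
lemma mulVec_sq_le {A : Matrix (Fin n) (Fin n) ℝ} {q : ℝ} (hA : A.PosSemidef)
    (hq : (q • (1 : Matrix (Fin n) (Fin n) ℝ) - A).PosSemidef) (hq0 : 0 ≤ q)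
    (v : Fin n → ℝ) : (A *ᵥ v) ⬝ᵥ (A *ᵥ v) ≤ q ^ 2 * (v ⬝ᵥ v) := by
  set w := A *ᵥ v with hw
  have h1 : w ⬝ᵥ w = v ⬝ᵥ A *ᵥ w := dot_symm hA.1 w v
  have h2 : (v ⬝ᵥ A *ᵥ w) ^ 2 ≤ (v ⬝ᵥ A *ᵥ v) * (w ⬝ᵥ A *ᵥ w) :=
    psd_cauchy_schwarz hA v w
  have h3 : v ⬝ᵥ A *ᵥ v ≤ q * (v ⬝ᵥ v) := form_le_of_psd hq v
  have h4 : w ⬝ᵥ A *ᵥ w ≤ q * (w ⬝ᵥ w) := form_le_of_psd hq w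
  have hvv : 0 ≤ v ⬝ᵥ v := Finset.sum_nonneg fun i _ => mul_self_nonneg _
  have hww : 0 ≤ w ⬝ᵥ w := Finset.sum_nonneg fun i _ => mul_self_nonneg _
  have h5 : (w ⬝ᵥ w) ^ 2 ≤ q ^ 2 * (v ⬝ᵥ v) * (w ⬝ᵥ w) := by
    calc (w ⬝ᵥ w) ^ 2 = (v ⬝ᵥ A *ᵥ w) ^ 2 := by rw [h1]
      _ ≤ (v ⬝ᵥ A *ᵥ v) * (w ⬝ᵥ A *ᵥ w) := h2
      _ ≤ (q * (v ⬝ᵥ v)) * (q * (w ⬝ᵥ w)) := by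
          apply mul_le_mul h3 h4 (psd_form_nonneg hA w)
          positivity
      _ = q ^ 2 * (v ⬝ᵥ v) * (w ⬝ᵥ w) := by ring
  rcases eq_or_lt_of_le hww with h | h
  · nlinarith
  · nlinarith

/-- powers: 0 ⪯ A ⪯ q•1 → A^k ⪯ q^k•1 -/
lemma pow_form_le {A : Matrix (Fin n) (Fin n) ℝ} {q : ℝ} (hA : A.PosSemidef)
    (hq : (q • (1 : Matrix (Fin n) (Fin n) ℝ) - A).PosSemidef) (hq0 : 0 ≤ q) :
    ∀ k, ∀ v : Fin n → ℝ, v ⬝ᵥ (A ^ k) *ᵥ v ≤ q ^ k * (v ⬝ᵥ v) := by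
  intro k
  induction k using Nat.strong_induction_on with
  | _ k ih =>
    match k with
    | 0 => intro v; simp
    | 1 => intro v; simpa using form_le_of_psd hq v
    | (m + 2) =>
      intro v
      have e1 : A ^ (m + 2) = A * (A ^ m * A) := by
        rw [pow_succ, pow_succ']
        rw [Matrix.mul_assoc]
      have key : v ⬝ᵥ (A ^ (m + 2)) *ᵥ v = (A *ᵥ v) ⬝ᵥ (A ^ m) *ᵥ (A *ᵥ v) := by
        calc v ⬝ᵥ (A ^ (m + 2)) *ᵥ v
            = v ⬝ᵥ A *ᵥ ((A ^ m) *ᵥ (A *ᵥ v)) := by rw [e1, ← mulVec_mulVec, ← mulVec_mulVec]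
          _ = ((A ^ m) *ᵥ (A *ᵥ v)) ⬝ᵥ A *ᵥ v := dot_symm hA.1 v _
          _ = (A *ᵥ v) ⬝ᵥ (A ^ m) *ᵥ (A *ᵥ v) := dotProduct_comm _ _
      rw [key]
      have h1 := ih m (by omega) (A *ᵥ v)
      have h2 := mulVec_sq_le hA hq hq0 v
      have h3 : (0:ℝ) ≤ q ^ m := pow_nonneg hq0 m
      calc (A *ᵥ v) ⬝ᵥ (A ^ m) *ᵥ (A *ᵥ v) ≤ q ^ m * ((A *ᵥ v) ⬝ᵥ (A *ᵥ v)) := h1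
        _ ≤ q ^ m * (q ^ 2 * (v ⬝ᵥ v)) := by
            apply mul_le_mul_of_nonneg_left h2 h3
        _ = q ^ (m + 2) * (v ⬝ᵥ v) := by ring


lemma psd_smul_one_sub_of_form {A : Matrix (Fin n) (Fin n) ℝ} (hA : A.IsHermitian)
    {c : ℝ} (h : ∀ v : Fin n → ℝ, v ⬝ᵥ A *ᵥ v ≤ c * (v ⬝ᵥ v)) :
    (c • (1 : Matrix (Fin n) (Fin n) ℝ) - A).PosSemidef := by
  refine PosSemidef.of_dotProduct_mulVec_nonneg ?_ ?_
  · simp only [Matrix.IsHermitian, conjTranspose_sub, conjTranspose_smul, star_trivial]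
    rw [conjTranspose_one, hA.eq]
  · intro v
    have := h v
    simp only [star_trivial, sub_mulVec, smul_mulVec, one_mulVec,
      dotProduct_sub, dotProduct_smul, smul_eq_mul]
    linarith

lemma trace_mul_le_of_psd {W B : Matrix (Fin n) (Fin n) ℝ} (hW : W.PosSemidef)
    {c : ℝ} (hc : (c • (1 : Matrix (Fin n) (Fin n) ℝ) - B).PosSemidef) :
    (W * B).trace ≤ c * W.trace := by
  have h0 : 0 ≤ (W * (c • (1 : Matrix (Fin n) (Fin n) ℝ) - B)).trace :=
    psd_trace_mul_nonneg hW hc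
  have h1 : W * (c • (1 : Matrix (Fin n) (Fin n) ℝ) - B) = c • W - W * B := by
    rw [Matrix.mul_sub, Matrix.mul_smul, Matrix.mul_one]
  rw [h1, trace_sub, trace_smul] at h0
  simp only [smul_eq_mul] at h0
  linarith

lemma geom_two (x : Matrix (Fin n) (Fin n) ℝ) (N : ℕ) :
    (1 - x) * ((1 - x) * (∑ m ∈ Finset.range N, ((m : ℝ) + 1) • x ^ m))
      = 1 - ((N : ℝ) + 1) • x ^ N + (N : ℝ) • x ^ (N + 1) := by
  induction N with
  | zero => simp
  | succ N ih =>
    have e1 : (1 - x) * x ^ N = x ^ N - x ^ (N + 1) := by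
      rw [sub_mul, one_mul, ← pow_succ']
    have e2 : (1 - x) * x ^ (N + 1) = x ^ (N + 1) - x ^ (N + 2) := by
      rw [sub_mul, one_mul, ← pow_succ']
    have hstep : (1 - x) * ((1 - x) * (((N : ℝ) + 1) • x ^ N))
        = ((N : ℝ) + 1) • (x ^ N - x ^ (N + 1) - (x ^ (N + 1) - x ^ (N + 2))) := by
      rw [mul_smul_comm, e1, mul_smul_comm, mul_sub, e1, e2]
    rw [Finset.sum_range_succ, mul_add, mul_add, ih, hstep]
    push_cast
    module


lemma trace_invsq_tendsto (hn : 0 < n) {σ : ℝ} (hσ : 0 < σ)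
    {Qm : Matrix (Fin n) (Fin n) ℝ} (hQ : Qm.PosDef)
    (hle : (σ • (1 : Matrix (Fin n) (Fin n) ℝ) - Qm).PosSemidef) :
    Tendsto (fun N => ∑ m ∈ Finset.range N,
      ((m : ℝ) + 1) * σ⁻¹ ^ (m + 2) *
        ((σ • (1 : Matrix (Fin n) (Fin n) ℝ) - Qm) ^ m).trace)
      atTop (𝓝 ((Qm⁻¹ * Qm⁻¹).trace)) := by
  classical
  set M : Matrix (Fin n) (Fin n) ℝ := σ • (1 : Matrix (Fin n) (Fin n) ℝ) - Qm with hM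
  set x : Matrix (Fin n) (Fin n) ℝ := σ⁻¹ • M with hx
  set y : Matrix (Fin n) (Fin n) ℝ := 1 - x with hy
  have hdet : IsUnit Qm.det := hQ.det_pos.ne'.isUnit
  have hyQ : y = σ⁻¹ • Qm := by
    rw [hy, hx, hM, smul_sub, smul_smul, inv_mul_cancel₀ hσ.ne', one_smul, sub_sub_cancel]
  -- trace of inverse is positive
  have hQinv : Qm⁻¹.PosDef := hQ.inv
  have hdiag : ∀ i, 0 < Qm⁻¹ i i := by
    intro i
    have hne : (Pi.single i 1 : Fin n → ℝ) ≠ 0 := by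
      intro h
      have := congrFun h i
      simp at this
    have := hQinv.dotProduct_mulVec_pos (x := Pi.single i 1) hne
    simpa [dotProduct_single, single_dotProduct, mulVec_single] using this
  have htrinv : 0 < Qm⁻¹.trace := by
    have : ∀ i ∈ Finset.univ, 0 ≤ Qm⁻¹ i i := fun i _ => (hdiag i).le
    exact Finset.sum_pos (fun i _ => hdiag i) ⟨⟨0, hn⟩, Finset.mem_univ _⟩
  set ε : ℝ := (Qm⁻¹.trace)⁻¹ with hε
  have hεpos : 0 < ε := inv_pos.mpr htrinv
  -- lower bound on the quadratic form of Qm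
  have hQlow : ∀ v : Fin n → ℝ, ε * (v ⬝ᵥ v) ≤ v ⬝ᵥ Qm *ᵥ v := by
    intro v
    by_cases hv : v ⬝ᵥ v = 0
    · have hv0 : v = 0 := dotProduct_self_eq_zero.mp hv
      subst hv0
      simp
    · have hvv : 0 < v ⬝ᵥ v :=
        lt_of_le_of_ne (Finset.sum_nonneg fun i _ => mul_self_nonneg _) (Ne.symm hv)
      set w : Fin n → ℝ := Qm⁻¹ *ᵥ v with hw
      have e_vw : v ⬝ᵥ Qm *ᵥ w = v ⬝ᵥ v := by
        rw [hw, mulVec_mulVec, mul_nonsing_inv _ hdet, one_mulVec]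
      have e_ww : w ⬝ᵥ Qm *ᵥ w = v ⬝ᵥ Qm⁻¹ *ᵥ v := by
        rw [hw, mulVec_mulVec, mul_nonsing_inv _ hdet, one_mulVec]
        exact dotProduct_comm _ _
      have cs := psd_cauchy_schwarz hQ.posSemidef v w
      rw [e_vw, e_ww] at cs
      have htr := psd_form_le_trace hQinv.posSemidef v
      have hf : 0 ≤ v ⬝ᵥ Qm *ᵥ v := psd_form_nonneg hQ.posSemidef v
      have key : v ⬝ᵥ v ≤ (v ⬝ᵥ Qm *ᵥ v) * Qm⁻¹.trace := by
        nlinarith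
      have : ε * (v ⬝ᵥ v) ≤ ε * ((v ⬝ᵥ Qm *ᵥ v) * Qm⁻¹.trace) :=
        mul_le_mul_of_nonneg_left key hεpos.le
      calc ε * (v ⬝ᵥ v) ≤ ε * ((v ⬝ᵥ Qm *ᵥ v) * Qm⁻¹.trace) := this
        _ = (v ⬝ᵥ Qm *ᵥ v) * (ε * Qm⁻¹.trace) := by ring
        _ = v ⬝ᵥ Qm *ᵥ v := by rw [hε, inv_mul_cancel₀ htrinv.ne', mul_one]
  -- x is PSD
  have hMform : ∀ v : Fin n → ℝ, v ⬝ᵥ M *ᵥ v = σ * (v ⬝ᵥ v) - v ⬝ᵥ Qm *ᵥ v := by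
    intro v
    rw [hM]
    simp [sub_mulVec, smul_mulVec, one_mulVec, dotProduct_sub, dotProduct_smul]
  have hx_psd : x.PosSemidef := by
    refine PosSemidef.of_dotProduct_mulVec_nonneg ?_ ?_
    · rw [hx]
      show (σ⁻¹ • M)ᴴ = σ⁻¹ • M
      rw [conjTranspose_smul, star_trivial, hle.1]
    · intro v
      have := psd_form_nonneg hle v
      rw [hx]
      simp only [star_trivial, smul_mulVec, dotProduct_smul, smul_eq_mul]
      have hσi : 0 ≤ σ⁻¹ := (inv_pos.mpr hσ).le
      exact mul_nonneg hσi this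
  -- bound x ⪯ q • 1
  set q : ℝ := 1 - ε * σ⁻¹ with hq
  have hσi : 0 < σ⁻¹ := inv_pos.mpr hσ
  have hεσ : ε ≤ σ := by
    set v0 : Fin n → ℝ := Pi.single ⟨0, hn⟩ 1 with hv0
    have h00 : v0 ⬝ᵥ v0 = 1 := by
      rw [hv0]
      simp [dotProduct_single]
    have h1 := hQlow v0
    have h2 := form_le_of_psd (q := σ) (A := Qm) hle v0
    rw [h00] at h1 h2
    simpa using h1.trans h2
  have hq0 : 0 ≤ q := by
    rw [hq]
    have : ε * σ⁻¹ ≤ σ * σ⁻¹ := mul_le_mul_of_nonneg_right hεσ hσi.le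
    rw [mul_inv_cancel₀ hσ.ne'] at this
    linarith
  have hq1 : q < 1 := by
    rw [hq]
    nlinarith [mul_pos hεpos hσi]
  have hxform : ∀ v : Fin n → ℝ, v ⬝ᵥ x *ᵥ v ≤ q * (v ⬝ᵥ v) := by
    intro v
    have h1 : v ⬝ᵥ x *ᵥ v = σ⁻¹ * (v ⬝ᵥ M *ᵥ v) := by
      rw [hx]
      simp [smul_mulVec, dotProduct_smul]
    rw [h1, hMform v, hq]
    have h2 := hQlow v
    have hvv : 0 ≤ v ⬝ᵥ v := Finset.sum_nonneg fun i _ => mul_self_nonneg _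
    have h3 : σ⁻¹ * (ε * (v ⬝ᵥ v)) ≤ σ⁻¹ * (v ⬝ᵥ Qm *ᵥ v) :=
      mul_le_mul_of_nonneg_left h2 hσi.le
    have h4 : σ⁻¹ * (σ * (v ⬝ᵥ v)) = v ⬝ᵥ v := by
      rw [← mul_assoc, inv_mul_cancel₀ hσ.ne', one_mul]
    nlinarith
  have hxq : (q • (1 : Matrix (Fin n) (Fin n) ℝ) - x).PosSemidef :=
    psd_smul_one_sub_of_form hx_psd.1 hxform
  -- inverse of y
  have hyherm : y.IsHermitian := by
    rw [hyQ]
    show (σ⁻¹ • Qm)ᴴ = σ⁻¹ • Qm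
    rw [conjTranspose_smul, star_trivial, hQ.isHermitian.eq]
  have hydet : IsUnit y.det := by
    rw [hyQ, det_smul]
    apply IsUnit.mul
    · exact (isUnit_iff_ne_zero).mpr (pow_ne_zero _ hσi.ne')
    · exact hdet
  have hyinv : y⁻¹ = σ • Qm⁻¹ := by
    apply inv_eq_right_inv
    rw [hyQ, Matrix.smul_mul, Matrix.mul_smul, smul_smul, inv_mul_cancel₀ hσ.ne',
      mul_nonsing_inv _ hdet, one_smul]
  have hWpsd : (y⁻¹ * y⁻¹).PosSemidef := by
    have h1 := posSemidef_conjTranspose_mul_self (y⁻¹)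
    rwa [hyherm.inv.eq] at h1
  have htrW : (y⁻¹ * y⁻¹).trace = σ ^ 2 * (Qm⁻¹ * Qm⁻¹).trace := by
    rw [hyinv, Matrix.smul_mul, Matrix.mul_smul, smul_smul, trace_smul, smul_eq_mul, pow_two]
  -- partial sums
  set P : ℕ → Matrix (Fin n) (Fin n) ℝ :=
    fun N => ∑ m ∈ Finset.range N, ((m : ℝ) + 1) • x ^ m with hP
  set E : ℕ → Matrix (Fin n) (Fin n) ℝ :=
    fun N => ((N : ℝ) + 1) • x ^ N - (N : ℝ) • x ^ (N + 1) with hE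
  have hid : ∀ N, y * (y * P N) = 1 - E N := by
    intro N
    simp only [hy, hP, hE]
    rw [geom_two x N]
    abel
  have hPval : ∀ N, P N = y⁻¹ * y⁻¹ - (y⁻¹ * y⁻¹) * E N := by
    intro N
    have h1 : y⁻¹ * (y * (y * P N)) = y⁻¹ * (1 - E N) := by rw [hid N]
    rw [← Matrix.mul_assoc, nonsing_inv_mul _ hydet, Matrix.one_mul] at h1
    have h2 : y⁻¹ * (y * P N) = y⁻¹ * (y⁻¹ * (1 - E N)) := by rw [h1]
    rw [← Matrix.mul_assoc, nonsing_inv_mul _ hydet, Matrix.one_mul] at h2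
    rw [h2, Matrix.mul_sub, Matrix.mul_sub, Matrix.mul_one, Matrix.mul_assoc]
  -- trace bounds
  have hxpow : ∀ k : ℕ, (x ^ k).PosSemidef := fun k => hx_psd.pow k
  have hbound : ∀ k : ℕ, 0 ≤ ((y⁻¹ * y⁻¹) * x ^ k).trace ∧
      ((y⁻¹ * y⁻¹) * x ^ k).trace ≤ q ^ k * (y⁻¹ * y⁻¹).trace := by
    intro k
    constructor
    · exact psd_trace_mul_nonneg hWpsd (hxpow k)
    · exact trace_mul_le_of_psd hWpsd
        (psd_smul_one_sub_of_form (hxpow k).1 (pow_form_le hx_psd hxq hq0 k))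
  have htrP : ∀ N, (P N).trace = (y⁻¹ * y⁻¹).trace
      - ((((N : ℝ) + 1) * ((y⁻¹ * y⁻¹) * x ^ N).trace)
        - (N : ℝ) * ((y⁻¹ * y⁻¹) * x ^ (N + 1)).trace) := by
    intro N
    rw [hPval N, trace_sub]
    congr 1
    rw [hE, Matrix.mul_sub, Matrix.mul_smul, Matrix.mul_smul, trace_sub,
      trace_smul, trace_smul, smul_eq_mul, smul_eq_mul]
  -- convergence of the error term
  have hqnorm : ‖q‖ < 1 := by
    rw [Real.norm_eq_abs, abs_of_nonneg hq0]
    exact hq1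
  have s1 : Tendsto (fun N : ℕ => (N : ℝ) * q ^ N) atTop (𝓝 0) := by
    have := (summable_pow_mul_geometric_of_norm_lt_one 1 hqnorm).tendsto_atTop_zero
    simpa using this
  have s2 : Tendsto (fun N : ℕ => q ^ N) atTop (𝓝 0) :=
    tendsto_pow_atTop_nhds_zero_of_norm_lt_one hqnorm
  have serr : Tendsto (fun N : ℕ =>
      (((N : ℝ) + 1) * ((y⁻¹ * y⁻¹) * x ^ N).trace)
        - (N : ℝ) * ((y⁻¹ * y⁻¹) * x ^ (N + 1)).trace) atTop (𝓝 0) := by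
    have hlow : Tendsto (fun N : ℕ => -((N : ℝ) * q ^ N * (q * (y⁻¹ * y⁻¹).trace)))
        atTop (𝓝 0) := by
      have h0 := (s1.mul_const (q * (y⁻¹ * y⁻¹).trace)).neg
      simpa using h0
    have hup : Tendsto (fun N : ℕ => ((N : ℝ) * q ^ N + q ^ N) * (y⁻¹ * y⁻¹).trace)
        atTop (𝓝 0) := by
      have h0 := (s1.add s2).mul_const ((y⁻¹ * y⁻¹).trace)
      simpa using h0
    refine tendsto_of_tendsto_of_tendsto_of_le_of_le hlow hup ?_ ?_
    · intro N
      have h1 := (hbound N).1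
      have h2 := (hbound (N + 1)).2
      have hpow : q ^ (N + 1) = q ^ N * q := pow_succ q N
      have hN0 : (0:ℝ) ≤ (N : ℝ) := Nat.cast_nonneg N
      have hN1 : (0:ℝ) ≤ (N : ℝ) + 1 := by linarith
      have f1 := mul_le_mul_of_nonneg_left h2 hN0
      have f2 : (0:ℝ) ≤ ((N : ℝ) + 1) * (y⁻¹ * y⁻¹ * x ^ N).trace := mul_nonneg hN1 h1
      have f3 : (N : ℝ) * (q ^ (N + 1) * (y⁻¹ * y⁻¹).trace)
          = (N : ℝ) * q ^ N * (q * (y⁻¹ * y⁻¹).trace) := by rw [hpow]; ring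
      simp only []
      linarith
    · intro N
      have h1 := (hbound N).2
      have h2 := (hbound (N + 1)).1
      have hN0 : (0:ℝ) ≤ (N : ℝ) := Nat.cast_nonneg N
      have hN1 : (0:ℝ) ≤ (N : ℝ) + 1 := by linarith
      have f1 := mul_le_mul_of_nonneg_left h1 hN1
      have f2 : (0:ℝ) ≤ (N : ℝ) * (y⁻¹ * y⁻¹ * x ^ (N + 1)).trace := mul_nonneg hN0 h2
      have f3 : ((N : ℝ) + 1) * (q ^ N * (y⁻¹ * y⁻¹).trace)
          = ((N : ℝ) * q ^ N + q ^ N) * (y⁻¹ * y⁻¹).trace := by ring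
      simp only []
      linarith
  have hPtend : Tendsto (fun N => (P N).trace) atTop (𝓝 ((y⁻¹ * y⁻¹).trace)) := by
    have := (tendsto_const_nhds (x := (y⁻¹ * y⁻¹).trace) (f := atTop (α := ℕ))).sub serr
    rw [sub_zero] at this
    apply this.congr
    intro N
    rw [htrP N]
  -- identification of the partial sums
  have hterm : ∀ N, (∑ m ∈ Finset.range N,
      ((m : ℝ) + 1) * σ⁻¹ ^ (m + 2) * (M ^ m).trace) = σ⁻¹ ^ 2 * (P N).trace := by
    intro N
    rw [hP]
    rw [trace_sum, Finset.mul_sum]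
    apply Finset.sum_congr rfl
    intro m _
    rw [trace_smul, smul_eq_mul]
    have hxm : x ^ m = σ⁻¹ ^ m • M ^ m := by
      rw [hx, smul_pow]
    rw [hxm, trace_smul, smul_eq_mul]
    ring
  have final : Tendsto (fun N => σ⁻¹ ^ 2 * (P N).trace) atTop
      (𝓝 (σ⁻¹ ^ 2 * (y⁻¹ * y⁻¹).trace)) := hPtend.const_mul _
  have heq : σ⁻¹ ^ 2 * (y⁻¹ * y⁻¹).trace = (Qm⁻¹ * Qm⁻¹).trace := by
    rw [htrW, ← mul_assoc, ← mul_pow, inv_mul_cancel₀ hσ.ne', one_pow, one_mul]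
  rw [heq] at final
  apply final.congr
  intro N
  rw [← hterm N]


/-- nonnegative, antitone, supermodular set functions -/
def IsGood (F : Finset (Fin n) → ℝ) : Prop :=
  (∀ S, 0 ≤ F S) ∧ (∀ A B : Finset (Fin n), A ⊆ B → F B ≤ F A) ∧
  (∀ A B : Finset (Fin n), F A + F B ≤ F (A ∪ B) + F (A ∩ B))

lemma isGood_const {c : ℝ} (hc : 0 ≤ c) : IsGood (fun _ : Finset (Fin n) => c) :=
  ⟨fun _ => hc, fun _ _ _ => le_rfl, fun _ _ => le_rfl⟩

lemma IsGood.add {F G : Finset (Fin n) → ℝ} (hF : IsGood F) (hG : IsGood G) :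
    IsGood (fun S => F S + G S) :=
  ⟨fun S => add_nonneg (hF.1 S) (hG.1 S),
   fun A B h => add_le_add (hF.2.1 A B h) (hG.2.1 A B h),
   fun A B => by
     have h1 := hF.2.2 A B; have h2 := hG.2.2 A B
     simp only []
     linarith⟩

lemma IsGood.mul_const {F : Finset (Fin n) → ℝ} (hF : IsGood F) {c : ℝ} (hc : 0 ≤ c) :
    IsGood (fun S => F S * c) :=
  ⟨fun S => mul_nonneg (hF.1 S) hc,
   fun A B h => mul_le_mul_of_nonneg_right (hF.2.1 A B h) hc,
   fun A B => by
     have h1 := hF.2.2 A B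
     simp only []
     nlinarith⟩

lemma isGood_sum {ι : Type*} (s : Finset ι) (G : ι → Finset (Fin n) → ℝ)
    (h : ∀ k ∈ s, IsGood (G k)) : IsGood (fun S => ∑ k ∈ s, G k S) := by
  classical
  induction s using Finset.induction_on with
  | empty => simpa using isGood_const le_rfl
  | @insert a s' hk hins =>
    have h1 : IsGood (G a) := h a (Finset.mem_insert_self a s')
    have h2 : IsGood (fun S => ∑ k ∈ s', G k S) :=
      hins fun k hks => h k (Finset.mem_insert_of_mem hks)
    have h3 := h1.add h2
    have h4 : (fun S => ∑ k ∈ insert a s', G k S)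
        = fun S => G a S + ∑ k ∈ s', G k S := by
      funext S
      rw [Finset.sum_insert hk]
    rw [h4]
    exact h3

/-- multiplying a good function by an antitone 0/1-type diagonal factor -/
lemma IsGood.mul_factor {F : Finset (Fin n) → ℝ} (hF : IsGood F)
    {a b : ℝ} (ha : 0 ≤ a) (hab : a ≤ b) (j : Fin n) :
    IsGood (fun S => F S * (if j ∈ S then a else b)) := by
  have hb : 0 ≤ b := ha.trans hab
  refine ⟨fun S => mul_nonneg (hF.1 S) (by by_cases h : j ∈ S <;> simp [h, ha, hb]), ?_, ?_⟩
  · intro A B hAB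
    have hFm := hF.2.1 A B hAB
    have hFB := hF.1 B
    by_cases hA : j ∈ A
    · have hB : j ∈ B := hAB hA
      simp only [hA, hB, if_true]
      exact mul_le_mul_of_nonneg_right hFm ha
    · by_cases hB : j ∈ B
      · simp only [hA, hB, if_true, if_false]
        calc F B * a ≤ F B * b := mul_le_mul_of_nonneg_left hab hFB
          _ ≤ F A * b := mul_le_mul_of_nonneg_right hFm hb
      · simp only [hA, hB, if_false]
        exact mul_le_mul_of_nonneg_right hFm hb
  · intro A B
    have hsup := hF.2.2 A B
    have hIA : F (A ∪ B) ≤ F A := hF.2.1 A (A ∪ B) Finset.subset_union_left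
    have hIB : F (A ∪ B) ≤ F B := hF.2.1 B (A ∪ B) Finset.subset_union_right
    have hAI : F A ≤ F (A ∩ B) := hF.2.1 (A ∩ B) A Finset.inter_subset_left
    have hBI : F B ≤ F (A ∩ B) := hF.2.1 (A ∩ B) B Finset.inter_subset_right
    by_cases hA : j ∈ A <;> by_cases hB : j ∈ B
    · have hU : j ∈ A ∪ B := Finset.mem_union_left _ hA
      have hI : j ∈ A ∩ B := Finset.mem_inter.mpr ⟨hA, hB⟩
      simp only [hA, hB, hU, hI, if_true]
      nlinarith
    · have hU : j ∈ A ∪ B := Finset.mem_union_left _ hA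
      have hI : j ∉ A ∩ B := fun h => hB (Finset.mem_inter.mp h).2
      simp only [hA, hB, hU, hI, if_true, if_false]
      nlinarith
    · have hU : j ∈ A ∪ B := Finset.mem_union_right _ hB
      have hI : j ∉ A ∩ B := fun h => hA (Finset.mem_inter.mp h).1
      simp only [hA, hB, hU, hI, if_true, if_false]
      nlinarith
    · have hU : j ∉ A ∪ B := fun h => by
        rcases Finset.mem_union.mp h with h' | h'
        exacts [hA h', hB h']
      have hI : j ∉ A ∩ B := fun h => hA (Finset.mem_inter.mp h).1
      simp only [hA, hB, hU, hI, if_false]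
      nlinarith

/-- entries of powers of the family `M S` are good set functions -/
lemma isGood_pow_entry (a b : Fin n → ℝ) (c : Matrix (Fin n) (Fin n) ℝ)
    (ha : ∀ i, 0 ≤ a i) (hab : ∀ i, a i ≤ b i) (hc : ∀ i j, i ≠ j → 0 ≤ c i j)
    (M : Finset (Fin n) → Matrix (Fin n) (Fin n) ℝ)
    (hM : ∀ S i j, M S i j = if i = j then (if i ∈ S then a i else b i) else c i j) :
    ∀ (m : ℕ) (i j : Fin n), IsGood (fun S => ((M S) ^ m) i j) := by
  intro m
  induction m with
  | zero =>
    intro i j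
    have h1 : (fun S : Finset (Fin n) => ((M S) ^ 0) i j)
        = fun _ => if i = j then (1:ℝ) else 0 := by
      funext S
      rw [pow_zero, Matrix.one_apply]
    rw [h1]
    by_cases h : i = j
    · rw [if_pos h]; exact isGood_const zero_le_one
    · rw [if_neg h]; exact isGood_const le_rfl
  | succ m ih =>
    intro i j
    have hexp : ∀ S, ((M S) ^ (m + 1)) i j = ∑ k, ((M S) ^ m) i k * (M S) k j := by
      intro S
      rw [pow_succ, Matrix.mul_apply]
    have : IsGood (fun S => ∑ k, ((M S) ^ m) i k * (M S) k j) := by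
      apply isGood_sum
      intro k _
      by_cases hkj : k = j
      · subst hkj
        have h1 : (fun S => ((M S) ^ m) i k * (M S) k k)
            = fun S => ((M S) ^ m) i k * (if k ∈ S then a k else b k) := by
          funext S
          rw [hM S k k]
          simp
        rw [h1]
        exact (ih i k).mul_factor (ha k) (hab k) k
      · have h1 : (fun S => ((M S) ^ m) i k * (M S) k j)
            = fun S => ((M S) ^ m) i k * c k j := by
          funext S
          rw [hM S k j, if_neg hkj]
        rw [h1]
        exact (ih i k).mul_const (hc k j hkj)
    have hco : (fun S => ((M S) ^ (m + 1)) i j)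
        = fun S => ∑ k, ((M S) ^ m) i k * (M S) k j := funext hexp
    rw [hco]
    exact this

end Helpers

/-- The second-order set function `f₂(∅) = 0`, `f₂(S) = C₂ − tr(Q_S⁻²)` for
nonempty `S`, with `C₂ = 2·max_{s ∈ V} tr(Q_{{s}}⁻²)`, is non-decreasing and
submodular, where `Q_S = L + D_κ D_S`. -/
theorem setFunction_f2_monotone_submodular (n : ℕ) (hn : 1 ≤ n)
    (L : Matrix (Fin n) (Fin n) ℝ)
    (hLsymm : L.IsSymm)
    (hLoff : ∀ i j, i ≠ j → L i j ≤ 0)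
    (hLrow : ∀ i, ∑ j, L i j = 0)
    (hLker : ∀ x : Fin n → ℝ, L.mulVec x = 0 ↔ ∃ c : ℝ, x = fun _ => c)
    (κ : Fin n → ℝ) (hκ : ∀ i, 0 < κ i)
    (Q : Finset (Fin n) → Matrix (Fin n) (Fin n) ℝ)
    (hQdef : ∀ S, Q S = L + Matrix.diagonal fun i => if i ∈ S then κ i else 0)
    (hQpos : ∀ S : Finset (Fin n), S.Nonempty → (Q S).PosDef)
    (mx : ℝ)
    (hmx : IsGreatest {x : ℝ | ∃ s : Fin n, x =
      Matrix.trace ((Q {s})⁻¹ * (Q {s})⁻¹)} mx)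
    (f₂ : Finset (Fin n) → ℝ)
    (hf0 : f₂ ∅ = 0)
    (hf : ∀ S : Finset (Fin n), S.Nonempty →
      f₂ S = 2 * mx - Matrix.trace ((Q S)⁻¹ * (Q S)⁻¹)) :
    (∀ A B : Finset (Fin n), A ⊆ B → f₂ A ≤ f₂ B) ∧
    (∀ A B : Finset (Fin n), f₂ (A ∪ B) + f₂ (A ∩ B) ≤ f₂ A + f₂ B) := by
  classical
  have hn0 : 0 < n := hn
  haveI : Nonempty (Fin n) := ⟨⟨0, hn0⟩⟩
  -- basic facts
  have hQherm : ∀ S, (Q S).IsHermitian := by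
    intro S
    rw [hQdef S]
    show (L + Matrix.diagonal fun i => if i ∈ S then κ i else 0)ᴴ = _
    rw [conjTranspose_add, conjTranspose_eq_transpose_of_trivial,
      conjTranspose_eq_transpose_of_trivial, diagonal_transpose, hLsymm]
  have hLdiag : ∀ i, 0 ≤ L i i := by
    intro i
    have h1 := hLrow i
    rw [← Finset.add_sum_erase _ _ (Finset.mem_univ i)] at h1
    have h2 : ∑ j ∈ Finset.univ.erase i, L i j ≤ 0 :=
      Finset.sum_nonpos fun j hj => hLoff i j (Ne.symm (Finset.mem_erase.mp hj).1)
    linarith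
  have hQdiag : ∀ S i, Q S i i = L i i + (if i ∈ S then κ i else 0) := by
    intro S i
    rw [hQdef S]
    simp [Matrix.add_apply, Matrix.diagonal_apply_eq]
  have hQuPD : (Q Finset.univ).PosDef := hQpos _ Finset.univ_nonempty
  have hdiagQu_nonneg : ∀ i, 0 ≤ Q Finset.univ i i := by
    intro i
    rw [hQdiag]
    simp only [Finset.mem_univ, if_true]
    have := (hκ i).le
    have := hLdiag i
    linarith
  have hdiag_le_tr : ∀ i, Q Finset.univ i i ≤ (Q Finset.univ).trace := by
    intro i
    exact Finset.single_le_sum (fun j _ => hdiagQu_nonneg j) (Finset.mem_univ i)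
  set σ : ℝ := (Q Finset.univ).trace + 1 with hσdef
  have htru : 0 ≤ (Q Finset.univ).trace := psd_trace_nonneg hQuPD.posSemidef
  have hσpos : 0 < σ := by rw [hσdef]; linarith
  -- the matrices M S
  set M : Finset (Fin n) → Matrix (Fin n) (Fin n) ℝ :=
    fun S => σ • (1 : Matrix (Fin n) (Fin n) ℝ) - Q S with hMdef
  have hM_entry : ∀ S i j, M S i j =
      if i = j then (if i ∈ S then σ - L i i - κ i else σ - L i i) else -L i j := by
    intro S i j
    rw [hMdef]
    simp only [Matrix.sub_apply, Matrix.smul_apply, Matrix.one_apply, smul_eq_mul]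
    by_cases hij : i = j
    · subst hij
      rw [if_pos rfl, if_pos rfl, hQdiag S i]
      by_cases hi : i ∈ S
      · rw [if_pos hi, if_pos hi]; ring
      · rw [if_neg hi, if_neg hi]; ring
    · rw [if_neg hij, if_neg hij, hQdef S]
      simp only [Matrix.add_apply, Matrix.diagonal_apply_ne _ hij]
      ring
  have hM_a_nonneg : ∀ i, 0 ≤ σ - L i i - κ i := by
    intro i
    have h1 := hdiag_le_tr i
    rw [hQdiag] at h1
    simp only [Finset.mem_univ, if_true] at h1
    rw [hσdef]
    linarith
  have hM_ab : ∀ i, σ - L i i - κ i ≤ σ - L i i := fun i => by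
    have := (hκ i).le; linarith
  -- goodness of the partial sums
  have good_tr : ∀ m : ℕ, IsGood (fun S => ((M S) ^ m).trace) := by
    intro m
    have h1 : (fun S => ((M S) ^ m).trace) = fun S => ∑ i, ((M S) ^ m) i i := by
      funext S
      rfl
    rw [h1]
    exact isGood_sum Finset.univ _ fun i _ =>
      isGood_pow_entry (fun i => σ - L i i - κ i) (fun i => σ - L i i) (fun i j => -L i j)
        hM_a_nonneg hM_ab (fun i j hij => by show (0:ℝ) ≤ -L i j; have := hLoff i j hij; linarith)
        M hM_entry m i i
  set T : ℕ → Finset (Fin n) → ℝ := fun N S => ∑ m ∈ Finset.range N,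
    ((m : ℝ) + 1) * σ⁻¹ ^ (m + 2) * ((M S) ^ m).trace with hTdef
  have good_T : ∀ N, IsGood (T N) := by
    intro N
    have h1 : T N = fun S => ∑ m ∈ Finset.range N,
        ((M S) ^ m).trace * (((m : ℝ) + 1) * σ⁻¹ ^ (m + 2)) := by
      funext S
      rw [hTdef]
      exact Finset.sum_congr rfl fun m _ => by ring
    rw [h1]
    apply isGood_sum
    intro m _
    apply (good_tr m).mul_const
    have h2 : (0:ℝ) ≤ σ⁻¹ := (inv_pos.mpr hσpos).le
    positivity
  -- PSD hypothesis for the convergence lemma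
  have hle : ∀ S : Finset (Fin n),
      (σ • (1 : Matrix (Fin n) (Fin n) ℝ) - Q S).PosSemidef := by
    intro S
    have part1 : (σ • (1 : Matrix (Fin n) (Fin n) ℝ) - Q Finset.univ).PosSemidef := by
      apply psd_smul_one_sub_of_form (hQherm Finset.univ)
      intro v
      have h1 := psd_form_le_trace hQuPD.posSemidef v
      have h2 : 0 ≤ v ⬝ᵥ v := Finset.sum_nonneg fun i _ => mul_self_nonneg _
      have h3 : (Q Finset.univ).trace * (v ⬝ᵥ v) ≤ σ * (v ⬝ᵥ v) := by
        apply mul_le_mul_of_nonneg_right _ h2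
        rw [hσdef]; linarith
      linarith
    have part2 : (Q Finset.univ - Q S).PosSemidef := by
      have he : Q Finset.univ - Q S
          = Matrix.diagonal (fun i => if i ∈ S then 0 else κ i) := by
        rw [hQdef, hQdef]
        rw [add_sub_add_left_eq_sub, Matrix.diagonal_sub]
        ext i j
        rcases eq_or_ne i j with rfl | hij
        · by_cases hi : i ∈ S <;> simp [hi]
        · simp [Matrix.diagonal_apply_ne _ hij]
      rw [he]
      exact PosSemidef.diagonal fun i => by by_cases hi : i ∈ S <;> simp [hi, (hκ i).le]
    have hsum := part1.add part2
    have he2 : (σ • (1 : Matrix (Fin n) (Fin n) ℝ) - Q Finset.univ) + (Q Finset.univ - Q S)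
        = σ • (1 : Matrix (Fin n) (Fin n) ℝ) - Q S := sub_add_sub_cancel _ _ _
    rwa [he2] at hsum
  -- convergence
  set trm : Finset (Fin n) → ℝ := fun S => ((Q S)⁻¹ * (Q S)⁻¹).trace with htrmdef
  have conv : ∀ S : Finset (Fin n), S.Nonempty →
      Tendsto (fun N => T N S) atTop (𝓝 (trm S)) := by
    intro S hS
    exact trace_invsq_tendsto hn0 hσpos (hQpos S hS) (hle S)
  -- key inequalities
  have key_mono : ∀ A B : Finset (Fin n), A.Nonempty → A ⊆ B → trm B ≤ trm A := by
    intro A B hA hAB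
    have hB : B.Nonempty := hA.mono hAB
    exact le_of_tendsto_of_tendsto' (conv B hB) (conv A hA)
      (fun N => (good_T N).2.1 A B hAB)
  have key_super : ∀ A B : Finset (Fin n), (A ∩ B).Nonempty →
      trm A + trm B ≤ trm (A ∪ B) + trm (A ∩ B) := by
    intro A B hI
    have hA : A.Nonempty := hI.mono Finset.inter_subset_left
    have hB : B.Nonempty := hI.mono Finset.inter_subset_right
    have hU : (A ∪ B).Nonempty := hA.mono Finset.subset_union_left
    exact le_of_tendsto_of_tendsto' ((conv A hA).add (conv B hB))
      ((conv (A ∪ B) hU).add (conv (A ∩ B) hI))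
      (fun N => (good_T N).2.2 A B)
  have trm_nonneg : ∀ S : Finset (Fin n), 0 ≤ trm S := by
    intro S
    have h1 := posSemidef_conjTranspose_mul_self ((Q S)⁻¹)
    rw [(hQherm S).inv.eq] at h1
    exact psd_trace_nonneg h1
  have trm_le_mx : ∀ S : Finset (Fin n), S.Nonempty → trm S ≤ mx := by
    intro S hS
    obtain ⟨s, hs⟩ := hS
    have h1 : trm S ≤ trm {s} :=
      key_mono {s} S (Finset.singleton_nonempty s) (Finset.singleton_subset_iff.mpr hs)
    have h2 : trm {s} ≤ mx := hmx.2 ⟨s, rfl⟩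
    linarith
  have mx_nonneg : 0 ≤ mx := by
    obtain ⟨s, hs⟩ := hmx.1
    rw [hs]
    exact trm_nonneg {s}
  constructor
  · intro A B hAB
    rcases A.eq_empty_or_nonempty with rfl | hA
    · rw [hf0]
      rcases B.eq_empty_or_nonempty with rfl | hB
      · rw [hf0]
      · rw [hf B hB]
        have := trm_le_mx B hB
        linarith
    · have hB : B.Nonempty := hA.mono hAB
      rw [hf A hA, hf B hB]
      have := key_mono A B hA hAB
      linarith
  · intro A B
    rcases (A ∩ B).eq_empty_or_nonempty with hI | hI
    · rw [hI, hf0]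
      rcases A.eq_empty_or_nonempty with rfl | hA
      · rw [Finset.empty_union, hf0]
        linarith
      · rcases B.eq_empty_or_nonempty with rfl | hB
        · rw [Finset.union_empty, hf0]
        · have hU : (A ∪ B).Nonempty := hA.mono Finset.subset_union_left
          rw [hf A hA, hf B hB, hf (A ∪ B) hU]
          have h1 := trm_le_mx A hA
          have h2 := trm_le_mx B hB
          have h3 := trm_nonneg (A ∪ B)
          linarith
    · have hA : A.Nonempty := hI.mono Finset.inter_subset_left
      have hB : B.Nonempty := hI.mono Finset.inter_subset_right
      have hU : (A ∪ B).Nonempty := hA.mono Finset.subset_union_left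
      rw [hf A hA, hf B hB, hf (A ∪ B) hU, hf (A ∩ B) hI]
      have := key_super A B hI
      linarith
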